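/- Let δ > 0, Λ ≠ 0 and C₀ > 0, and let r : ℝ × ℝ → ℝ be continuously differentiable with |r(u, q)| ≤ C₀ (|u|³ + |u||q| + |q|²) for all (u, q). For q ∈ ℝ define F_q(u) := δ^{−1}(−q + Λ u²/2) + r(u, q). Then for every η ∈ (0, 1) there exists q₀ > 0 such that for all q with Λ q > 0 and |q| ≤ q₀ the following hold: F_q has a zero u₋ with Λ u₋ > 0 and a zero u₊ with Λ u₊ < 0, both satisfying (1−η)√(2q/Λ) ≤ |u_±| ≤ (1+η)√(2q/Λ); taking u₋ and u₊ to be respectively the zeros of F_q with Λu₋ > 0 and Λ u₊ < 0 closest to 0, there exists a C¹ solution u : ℝ → ℝ of u'(x) = F_q(u(x)) with u strictly between u₊ and u₋, with Λ u(x) strictly decreasing in x, and with u(x) → u₋ as x → −∞ and u(x) → u₊ as x → +∞. -/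

import Mathlib

open Filter

set_option synthInstance.maxHeartbeats 400000
set_option maxHeartbeats 1000000

/-- The fiber vector field `F_q(u) = δ⁻¹(−q + Λu²/2) + r(u,q)` of the approximate
Burgers flow on the one-dimensional fibers of the center manifold. -/
noncomputable def burgersField (δ Λ : ℝ) (r : ℝ → ℝ → ℝ) (q u : ℝ) : ℝ :=
  δ⁻¹ * (-q + Λ * u ^ 2 / 2) + r u q

section Aux

open Set MeasureTheory intervalIntegral

lemma hetero_exists (F : ℝ → ℝ) (a b L : ℝ) (hab : a < b) (hF : Continuous F)
    (hneg : ∀ v ∈ Set.Ioo a b, F v < 0)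
    (hL : 0 < L)
    (hLa : ∀ v ∈ Set.Ioo a b, -F v ≤ L * (v - a))
    (hLb : ∀ v ∈ Set.Ioo a b, -F v ≤ L * (b - v)) :
    ∃ u : ℝ → ℝ, (∀ x, HasDerivAt u (F (u x)) x) ∧ (∀ x, u x ∈ Set.Ioo a b) ∧
      StrictAnti u ∧ Tendsto u atBot (nhds b) ∧ Tendsto u atTop (nhds a) := by
  set c : ℝ := (a + b) / 2 with hc_def
  have hac : a < c := by simp [hc_def]; linarith
  have hcb : c < b := by simp [hc_def]; linarith
  have hc : c ∈ Ioo a b := ⟨hac, hcb⟩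
  set g : ℝ → ℝ := fun v => (F v)⁻¹ with hg_def
  have hgneg : ∀ v ∈ Ioo a b, g v < 0 := fun v hv => inv_lt_zero.2 (hneg v hv)
  have hgmeas : StronglyMeasurable g := (hF.measurable.inv).stronglyMeasurable
  have hgcAt : ∀ v ∈ Ioo a b, ContinuousAt g v := fun v hv =>
    hF.continuousAt.inv₀ (hneg v hv).ne
  have hgint : ∀ u1 ∈ Ioo a b, ∀ u2 ∈ Ioo a b, IntervalIntegrable g volume u1 u2 := by
    intro u1 h1 u2 h2
    apply ContinuousOn.intervalIntegrable
    intro v hv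
    exact (hgcAt v (ordConnected_Ioo.uIcc_subset h1 h2 hv)).continuousWithinAt
  set G : ℝ → ℝ := fun u => ∫ v in c..u, g v with hG_def
  have hGderiv : ∀ u ∈ Ioo a b, HasDerivAt G (g u) u := by
    intro u hu
    exact intervalIntegral.integral_hasDerivAt_right (hgint c hc u hu)
      (hgmeas.stronglyMeasurableAtFilter) (hgcAt u hu)
  have hGanti : ∀ u1 ∈ Ioo a b, ∀ u2 ∈ Ioo a b, u1 < u2 → G u2 < G u1 := by
    intro u1 h1 u2 h2 h12
    have hadd := intervalIntegral.integral_add_adjacent_intervals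
      (hgint c hc u1 h1) (hgint u1 h1 u2 h2)
    have hposneg : 0 < ∫ v in u1..u2, -g v := by
      apply intervalIntegral.intervalIntegral_pos_of_pos_on ((hgint u1 h1 u2 h2).neg)
      · intro x hx
        have hx' : x ∈ Ioo a b := ⟨lt_trans h1.1 hx.1, lt_trans hx.2 h2.2⟩
        simp only [Pi.neg_apply]
        linarith [hgneg x hx']
      · exact h12
    rw [intervalIntegral.integral_neg] at hposneg
    have : G u2 = G u1 + ∫ v in u1..u2, g v := by rw [hG_def]; exact hadd.symm
    rw [this]; linarith
  -- upper bound near b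
  have hub : ∀ u ∈ Ico c b, G u ≤ L⁻¹ * (Real.log (b - u) - Real.log (b - c)) := by
    intro u hu
    have hu' : u ∈ Ioo a b := ⟨lt_of_lt_of_le hac hu.1, hu.2⟩
    set φ : ℝ → ℝ := fun v => -(L * (b - v))⁻¹ with hφ_def
    have hφcont : ContinuousOn φ (uIcc c u) := by
      have hsub : uIcc c u ⊆ Iio b := by
        rw [uIcc_of_le hu.1]; intro v hv; exact lt_of_le_of_lt hv.2 hu'.2
      apply ContinuousOn.neg
      apply ContinuousOn.inv₀
      · fun_prop
      · intro v hv
        have hvb : v < b := hsub hv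
        exact (by nlinarith : (0:ℝ) < L * (b - v)).ne'
    have hφint : IntervalIntegrable φ volume c u := hφcont.intervalIntegrable
    have hmono : (∫ v in c..u, g v) ≤ ∫ v in c..u, φ v := by
      apply intervalIntegral.integral_mono_on hu.1 (hgint c hc u hu') hφint
      intro v hv
      have hv' : v ∈ Ioo a b := ⟨lt_of_lt_of_le hac hv.1, lt_of_le_of_lt hv.2 hu.2⟩
      have h1 : 0 < -F v := by linarith [hneg v hv']
      have h2 : -F v ≤ L * (b - v) := hLb v hv'
      have h3 : 0 < L * (b - v) := lt_of_lt_of_le h1 h2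
      have h4 : (L * (b - v))⁻¹ ≤ (-F v)⁻¹ := inv_anti₀ h1 h2
      show (F v)⁻¹ ≤ -(L * (b - v))⁻¹
      have h5 : (F v)⁻¹ = -(-F v)⁻¹ := by rw [inv_neg, neg_neg]
      rw [h5]; exact neg_le_neg h4
    have hcalc : (∫ v in c..u, φ v) = L⁻¹ * Real.log (b - u) - L⁻¹ * Real.log (b - c) := by
      have := intervalIntegral.integral_eq_sub_of_hasDerivAt
        (f := fun v => L⁻¹ * Real.log (b - v)) (f' := φ) (a := c) (b := u) ?_ hφint
      · rw [this]
      · intro v hv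
        rw [uIcc_of_le hu.1] at hv
        have hvb : v < b := lt_of_le_of_lt hv.2 hu.2
        have hbv : b - v ≠ 0 := by linarith
        have hinner : HasDerivAt (fun v : ℝ => b - v) (-1) v := by
          simpa using (hasDerivAt_id v).const_sub b
        have hlog : HasDerivAt (fun v : ℝ => Real.log (b - v)) ((b - v)⁻¹ * (-1)) v :=
          (Real.hasDerivAt_log hbv).comp v hinner
        have := hlog.const_mul L⁻¹
        refine this.congr_deriv ?_
        rw [hφ_def]
        field_simp
    calc G u ≤ ∫ v in c..u, φ v := hmono
      _ = L⁻¹ * (Real.log (b - u) - Real.log (b - c)) := by rw [hcalc]; ring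
  -- lower bound near a
  have hlb : ∀ u ∈ Ioc a c, L⁻¹ * (Real.log (c - a) - Real.log (u - a)) ≤ G u := by
    intro u hu
    have hu' : u ∈ Ioo a b := ⟨hu.1, lt_of_le_of_lt hu.2 hcb⟩
    set ψ : ℝ → ℝ := fun v => -(L * (v - a))⁻¹ with hψ_def
    have hψcont : ContinuousOn ψ (uIcc u c) := by
      have hsub : uIcc u c ⊆ Ioi a := by
        rw [uIcc_of_le hu.2]; intro v hv; exact lt_of_lt_of_le hu'.1 hv.1
      apply ContinuousOn.neg
      apply ContinuousOn.inv₀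
      · fun_prop
      · intro v hv
        have hav : a < v := hsub hv
        exact (by nlinarith : (0:ℝ) < L * (v - a)).ne'
    have hψint : IntervalIntegrable ψ volume u c := hψcont.intervalIntegrable
    have hmono : (∫ v in u..c, g v) ≤ ∫ v in u..c, ψ v := by
      apply intervalIntegral.integral_mono_on hu.2 (hgint u hu' c hc) hψint
      intro v hv
      have hv' : v ∈ Ioo a b := ⟨lt_of_lt_of_le hu.1 hv.1, lt_of_le_of_lt hv.2 hcb⟩
      have h1 : 0 < -F v := by linarith [hneg v hv']
      have h2 : -F v ≤ L * (v - a) := hLa v hv'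
      have h4 : (L * (v - a))⁻¹ ≤ (-F v)⁻¹ := inv_anti₀ h1 h2
      show (F v)⁻¹ ≤ -(L * (v - a))⁻¹
      have h5 : (F v)⁻¹ = -(-F v)⁻¹ := by rw [inv_neg, neg_neg]
      rw [h5]; exact neg_le_neg h4
    have hcalc : (∫ v in u..c, ψ v)
        = (-(L⁻¹ * Real.log (c - a))) - (-(L⁻¹ * Real.log (u - a))) := by
      apply intervalIntegral.integral_eq_sub_of_hasDerivAt
        (f := fun v => -(L⁻¹ * Real.log (v - a))) (f' := ψ) ?_ hψint
      intro v hv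
      rw [uIcc_of_le hu.2] at hv
      have hav : a < v := lt_of_lt_of_le hu.1 hv.1
      have hva : v - a ≠ 0 := by linarith
      have hinner : HasDerivAt (fun v : ℝ => v - a) 1 v := by
        simpa using (hasDerivAt_id v).sub_const a
      have hlog : HasDerivAt (fun v : ℝ => Real.log (v - a)) ((v - a)⁻¹ * 1) v := by
        have := (Real.hasDerivAt_log hva).comp v hinner; exact this
      have := (hlog.const_mul L⁻¹).neg
      refine this.congr_deriv ?_
      rw [hψ_def]
      field_simp
    have hGu : G u = -∫ v in u..c, g v :=
      intervalIntegral.integral_symm u c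
    rw [hGu]
    rw [hcalc] at hmono
    linarith
  have hLinv : (0:ℝ) < L⁻¹ := inv_pos.2 hL
  -- Tendsto G (𝓝[<] b) atBot
  have htb : Tendsto G (nhdsWithin b (Iio b)) atBot := by
    apply tendsto_atBot_mono' _ (f₁ := fun u => L⁻¹ * (Real.log (b - u) - Real.log (b - c)))
    · have h1 : ∀ᶠ u in nhdsWithin b (Iio b), u ∈ Ico c b := by
        filter_upwards [eventually_mem_nhdsWithin,
          (eventually_gt_nhds hcb).filter_mono nhdsWithin_le_nhds] with u h1 h2
        exact ⟨le_of_lt h2, h1⟩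
      filter_upwards [h1] with u hu
      exact hub u hu
    · have hsub : Tendsto (fun u : ℝ => b - u) (nhdsWithin b (Iio b)) (nhdsWithin 0 (Ioi 0)) := by
        apply tendsto_nhdsWithin_of_tendsto_nhds_of_eventually_within
        · have : Tendsto (fun u : ℝ => b - u) (nhds b) (nhds (b - b)) :=
            tendsto_const_nhds.sub tendsto_id
          simpa using this.mono_left nhdsWithin_le_nhds
        · filter_upwards [eventually_mem_nhdsWithin] with u hu
          simp only [mem_Ioi, sub_pos]; exact hu
      have hlog : Tendsto (fun u : ℝ => Real.log (b - u)) (nhdsWithin b (Iio b)) atBot :=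
        Real.tendsto_log_nhdsGT_zero.comp hsub
      have : Tendsto (fun u : ℝ => Real.log (b - u) - Real.log (b - c))
          (nhdsWithin b (Iio b)) atBot := tendsto_atBot_add_const_right _ _ hlog
      exact Tendsto.const_mul_atBot hLinv this
  -- Tendsto G (𝓝[>] a) atTop
  have hta : Tendsto G (nhdsWithin a (Ioi a)) atTop := by
    apply tendsto_atTop_mono' _ (f₁ := fun u => L⁻¹ * (Real.log (c - a) - Real.log (u - a)))
    · have h1 : ∀ᶠ u in nhdsWithin a (Ioi a), u ∈ Ioc a c := by
        filter_upwards [eventually_mem_nhdsWithin,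
          (eventually_lt_nhds hac).filter_mono nhdsWithin_le_nhds] with u h1 h2
        exact ⟨h1, le_of_lt h2⟩
      filter_upwards [h1] with u hu
      exact hlb u hu
    · have hsub : Tendsto (fun u : ℝ => u - a) (nhdsWithin a (Ioi a)) (nhdsWithin 0 (Ioi 0)) := by
        apply tendsto_nhdsWithin_of_tendsto_nhds_of_eventually_within
        · have : Tendsto (fun u : ℝ => u - a) (nhds a) (nhds (a - a)) :=
            tendsto_id.sub tendsto_const_nhds
          simpa using this.mono_left nhdsWithin_le_nhds
        · filter_upwards [eventually_mem_nhdsWithin] with u hu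
          simp only [mem_Ioi, sub_pos]; exact hu
      have hlog : Tendsto (fun u : ℝ => Real.log (u - a)) (nhdsWithin a (Ioi a)) atBot :=
        Real.tendsto_log_nhdsGT_zero.comp hsub
      have h2 : Tendsto (fun u : ℝ => Real.log (c - a) - Real.log (u - a))
          (nhdsWithin a (Ioi a)) atTop := by
        apply tendsto_atTop_add_const_left
        exact tendsto_neg_atBot_atTop.comp hlog
      exact Tendsto.const_mul_atTop hLinv h2
  -- surjectivity
  have hGcont : ∀ u1 ∈ Ioo a b, ∀ u2 ∈ Ioo a b, ContinuousOn G (Icc u1 u2) := by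
    intro u1 h1 u2 h2 v hv
    have hv' : v ∈ Ioo a b := by
      constructor
      · exact lt_of_lt_of_le h1.1 hv.1
      · exact lt_of_le_of_lt hv.2 h2.2
    exact (hGderiv v hv').continuousAt.continuousWithinAt
  have hsurj : ∀ x : ℝ, ∃ u ∈ Ioo a b, G u = x := by
    intro x
    have h1 : ∀ᶠ u in nhdsWithin a (Ioi a), x < G u ∧ u ∈ Ioo a b := by
      filter_upwards [hta.eventually_gt_atTop x, eventually_mem_nhdsWithin,
        (eventually_lt_nhds hab).filter_mono nhdsWithin_le_nhds] with u hu h2 h3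
      exact ⟨hu, h2, h3⟩
    obtain ⟨u1, hxu1, hu1⟩ := h1.exists
    have h2 : ∀ᶠ u in nhdsWithin b (Iio b), G u < x ∧ u ∈ Ioo a b := by
      filter_upwards [htb.eventually_lt_atBot x, eventually_mem_nhdsWithin,
        (eventually_gt_nhds hab).filter_mono nhdsWithin_le_nhds] with u hu h2 h3
      exact ⟨hu, h3, h2⟩
    obtain ⟨u2, hxu2, hu2⟩ := h2.exists
    have h12 : u1 < u2 := by
      rcases lt_trichotomy u1 u2 with h | h | h
      · exact h
      · exfalso; rw [h] at hxu1; linarith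
      · exfalso; have := hGanti u2 hu2 u1 hu1 h; linarith
    have := intermediate_value_Icc' (le_of_lt h12) (hGcont u1 hu1 u2 hu2)
    have hx : x ∈ Icc (G u2) (G u1) := ⟨le_of_lt hxu2, le_of_lt hxu1⟩
    obtain ⟨u, hu, hGu⟩ := this hx
    refine ⟨u, ⟨lt_of_lt_of_le hu1.1 hu.1, lt_of_le_of_lt hu.2 hu2.2⟩, hGu⟩
  choose U hUmem hUG using hsurj
  have huniq : ∀ x, ∀ w ∈ Ioo a b, G w = x → w = U x := by
    intro x w hw hGw
    rcases lt_trichotomy w (U x) with h | h | h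
    · exfalso; have := hGanti w hw (U x) (hUmem x) h; rw [hGw, hUG x] at this; linarith
    · exact h
    · exfalso; have := hGanti (U x) (hUmem x) w hw h; rw [hGw, hUG x] at this; linarith
  have hUanti : StrictAnti U := by
    intro x y hxy
    rcases lt_trichotomy (U y) (U x) with h | h | h
    · exact h
    · exfalso
      have : x = y := by rw [← hUG x, ← hUG y, h]
      linarith
    · exfalso
      have := hGanti (U x) (hUmem x) (U y) (hUmem y) h
      rw [hUG x, hUG y] at this; linarith
  -- key monotone comparison lemmas
  have hUgt : ∀ x : ℝ, ∀ w ∈ Ioo a b, x < G w → w < U x := by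
    intro x w hw hxw
    rcases lt_trichotomy w (U x) with h | h | h
    · exact h
    · exfalso; rw [h, hUG x] at hxw; linarith
    · exfalso; have := hGanti (U x) (hUmem x) w hw h; rw [hUG x] at this; linarith
  have hUlt : ∀ x : ℝ, ∀ w ∈ Ioo a b, G w < x → U x < w := by
    intro x w hw hxw
    rcases lt_trichotomy (U x) w with h | h | h
    · exact h
    · exfalso; rw [← h, hUG x] at hxw; linarith
    · exfalso; have := hGanti w hw (U x) (hUmem x) h; rw [hUG x] at this; linarith
  have hUcont : ∀ x, ContinuousAt U x := by
    intro x
    rw [ContinuousAt]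
    rw [tendsto_order]
    constructor
    · intro v hv
      set w : ℝ := max v ((a + U x) / 2) with hw_def
      have hwa : a < w := lt_max_of_lt_right (by linarith [(hUmem x).1])
      have hwUx : w < U x := by
        apply max_lt hv
        linarith [(hUmem x).1]
      have hw : w ∈ Ioo a b := ⟨hwa, lt_trans hwUx (hUmem x).2⟩
      have hGw : x < G w := by
        have := hGanti w hw (U x) (hUmem x) hwUx
        rw [hUG x] at this; linarith
      filter_upwards [eventually_lt_nhds hGw] with y hy
      have := hUgt y w hw hy
      exact lt_of_le_of_lt (le_max_left v _) this
    · intro v hv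
      set w : ℝ := min v ((U x + b) / 2) with hw_def
      have hwb : w < b := min_lt_of_right_lt (by linarith [(hUmem x).2])
      have hUxw : U x < w := by
        apply lt_min hv
        linarith [(hUmem x).2]
      have hw : w ∈ Ioo a b := ⟨lt_trans (hUmem x).1 hUxw, hwb⟩
      have hGw : G w < x := by
        have := hGanti (U x) (hUmem x) w hw hUxw
        rw [hUG x] at this; linarith
      filter_upwards [eventually_gt_nhds hGw] with y hy
      have := hUlt y w hw hy
      exact lt_of_lt_of_le this (min_le_left v _)
  have hUderiv : ∀ x, HasDerivAt U (F (U x)) x := by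
    intro x
    have hne : g (U x) ≠ 0 := by
      have := hgneg (U x) (hUmem x); linarith
    have := HasDerivAt.of_local_left_inverse (hUcont x) (hGderiv (U x) (hUmem x)) hne
      (Filter.Eventually.of_forall fun y => hUG y)
    have hinv : (g (U x))⁻¹ = F (U x) := by rw [hg_def]; simp
    rwa [hinv] at this
  have hUbot : Tendsto U atBot (nhds b) := by
    rw [tendsto_order]
    constructor
    · intro v hv
      set w : ℝ := max v c with hw_def
      have hw : w ∈ Ioo a b := ⟨lt_max_of_lt_right hac, max_lt hv hcb⟩
      have : ∀ᶠ x in atBot, x < G w := eventually_lt_atBot (G w)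
      filter_upwards [this] with x hx
      exact lt_of_le_of_lt (le_max_left v c) (hUgt x w hw hx)
    · intro v hv
      filter_upwards with x
      exact lt_trans (hUmem x).2 hv
  have hUtop : Tendsto U atTop (nhds a) := by
    rw [tendsto_order]
    constructor
    · intro v hv
      filter_upwards with x
      exact lt_of_lt_of_le hv (le_of_lt (hUmem x).1)
    · intro v hv
      set w : ℝ := min v c with hw_def
      have hw : w ∈ Ioo a b := ⟨lt_min hv hac, min_lt_of_right_lt hcb⟩
      filter_upwards [eventually_gt_atTop (G w)] with x hx
      exact lt_of_lt_of_le (hUlt x w hw hx) (min_le_left v c)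
  exact ⟨U, hUderiv, hUmem, hUanti, hUbot, hUtop⟩

lemma core_pos (δ Λ C₀ : ℝ) (hδ : 0 < δ) (hΛ : 0 < Λ) (hC₀ : 0 < C₀)
    (r : ℝ → ℝ → ℝ) (hr : ContDiff ℝ 1 (Function.uncurry r))
    (hrbd : ∀ u q : ℝ, |r u q| ≤ C₀ * (|u| ^ 3 + |u| * |q| + |q| ^ 2))
    (η : ℝ) (hη0 : 0 < η) (hη1 : η < 1) :
      ∃ q₀ : ℝ, 0 < q₀ ∧
        ∀ q : ℝ, 0 < Λ * q → |q| ≤ q₀ →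
          ∃ um up : ℝ,
            (burgersField δ Λ r q um = 0 ∧ 0 < Λ * um ∧
              (1 - η) * Real.sqrt (2 * q / Λ) ≤ |um| ∧
              |um| ≤ (1 + η) * Real.sqrt (2 * q / Λ) ∧
              (∀ z : ℝ, burgersField δ Λ r q z = 0 → 0 < Λ * z → |um| ≤ |z|)) ∧
            (burgersField δ Λ r q up = 0 ∧ Λ * up < 0 ∧
              (1 - η) * Real.sqrt (2 * q / Λ) ≤ |up| ∧
              |up| ≤ (1 + η) * Real.sqrt (2 * q / Λ) ∧
              (∀ z : ℝ, burgersField δ Λ r q z = 0 → Λ * z < 0 → |up| ≤ |z|)) ∧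
            ∃ u : ℝ → ℝ,
              (∀ x : ℝ, HasDerivAt u (burgersField δ Λ r q (u x)) x) ∧
              (∀ x : ℝ, min um up < u x ∧ u x < max um up) ∧
              StrictAnti (fun x : ℝ => Λ * u x) ∧
              Tendsto u atBot (nhds um) ∧ Tendsto u atTop (nhds up) := by
  set K : ℝ := C₀ * (16 / Λ + 3) with hK_def
  have hK : 0 < K := by
    apply mul_pos hC₀
    have : 0 < 16 / Λ := by positivity
    linarith
  set ε : ℝ := δ⁻¹ * η / (2 * K) with hε_def
  have hε : 0 < ε := by positivity
  have hKε : K * ε = δ⁻¹ * η / 2 := by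
    rw [hε_def]; field_simp
  refine ⟨min ε (Λ * ε ^ 2 / 2), by positivity, ?_⟩
  intro q hΛq hq0
  have hq : 0 < q := by
    by_contra h
    push_neg at h
    nlinarith
  have hqε : q ≤ ε := le_trans (le_trans (le_abs_self q) hq0) (min_le_left _ _)
  have hqε2 : q ≤ Λ * ε ^ 2 / 2 := le_trans (le_trans (le_abs_self q) hq0) (min_le_right _ _)
  set s : ℝ := Real.sqrt (2 * q / Λ) with hs_def
  have hs2 : s ^ 2 = 2 * q / Λ := Real.sq_sqrt (by positivity)
  have hs : 0 < s := Real.sqrt_pos.2 (by positivity)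
  have hΛs : Λ * s ^ 2 / 2 = q := by rw [hs2]; field_simp
  have hsε : s ≤ ε := by
    rw [hs_def]
    have h1 : 2 * q / Λ ≤ ε ^ 2 := by
      rw [div_le_iff₀ hΛ]; nlinarith
    calc Real.sqrt (2 * q / Λ) ≤ Real.sqrt (ε ^ 2) := Real.sqrt_le_sqrt h1
      _ = ε := by rw [Real.sqrt_sq hε.le]
  set F : ℝ → ℝ := burgersField δ Λ r q with hF_def
  have hrc : Continuous fun u : ℝ => r u q := by
    have h : (fun u : ℝ => r u q) = Function.uncurry r ∘ fun u : ℝ => (u, q) := rfl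
    rw [h]
    exact hr.continuous.comp (continuous_id.prodMk continuous_const)
  have hFcont : Continuous F := by
    rw [hF_def]
    unfold burgersField
    exact (continuous_const.mul ((continuous_const.add
      (((continuous_const.mul (continuous_pow 2)).div_const 2))))).add hrc
  -- key bound on r
  have hrK : ∀ u : ℝ, |u| ≤ 2 * s → |r u q| ≤ δ⁻¹ * η * q / 2 := by
    intro u hu
    have h0 : |u| ^ 3 ≤ (2 * s) ^ 3 := pow_le_pow_left₀ (abs_nonneg u) hu 3
    have h1 : |r u q| ≤ C₀ * (|u| ^ 3 + |u| * |q| + |q| ^ 2) := hrbd u q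
    have hqabs : |q| = q := abs_of_pos hq
    have hs3 : (2 * s) ^ 3 = (16 / Λ) * s * q := by
      have : (2 * s) ^ 3 = 8 * (s * s ^ 2) := by ring
      rw [this, hs2]; field_simp; ring
    have hA : |u| ^ 3 ≤ (16 / Λ) * s * q := by rw [← hs3]; exact h0
    have hB : |u| * |q| ≤ 2 * s * q := by
      rw [hqabs]; exact mul_le_mul_of_nonneg_right hu hq.le
    have hCq : |q| ^ 2 ≤ q * q := by rw [hqabs]; nlinarith
    have h2 : |u| ^ 3 + |u| * |q| + |q| ^ 2 ≤ (16 / Λ) * s * q + 2 * s * q + q * q := by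
      linarith
    have h16 : (0:ℝ) < 16 / Λ := by positivity
    have h3 : (16 / Λ) * s * q + 2 * s * q + q * q ≤ (16 / Λ + 3) * ε * q := by
      nlinarith [mul_nonneg (mul_nonneg h16.le (sub_nonneg.2 hsε)) hq.le,
        mul_nonneg (mul_nonneg (by norm_num : (0:ℝ) ≤ 2) (sub_nonneg.2 hsε)) hq.le,
        mul_nonneg (sub_nonneg.2 hqε) hq.le]
    have h5 : K * ε * q = δ⁻¹ * η * q / 2 := by rw [hKε]; ring
    calc |r u q| ≤ C₀ * (|u| ^ 3 + |u| * |q| + |q| ^ 2) := h1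
      _ ≤ C₀ * ((16 / Λ + 3) * ε * q) := by nlinarith
      _ = K * ε * q := by rw [hK_def]; ring
      _ = δ⁻¹ * η * q / 2 := h5
  have hδinv : 0 < δ⁻¹ := inv_pos.2 hδ
  -- F negative on |u| ≤ (1-η) s
  have hFneg : ∀ u : ℝ, |u| ≤ (1 - η) * s → F u < 0 := by
    intro u hu
    have hu2 : u ^ 2 ≤ ((1 - η) * s) ^ 2 := by
      have := abs_nonneg u
      nlinarith [sq_abs u]
    have h1 : δ⁻¹ * (-q + Λ * u ^ 2 / 2) ≤ -(δ⁻¹ * η * q) := by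
      have hsq : Λ * ((1 - η) * s) ^ 2 / 2 = (1 - η) ^ 2 * q := by
        rw [← hΛs]; ring
      have hΛu : Λ * u ^ 2 / 2 ≤ (1 - η) ^ 2 * q := by nlinarith
      have h2 : -q + Λ * u ^ 2 / 2 ≤ -(η * q) := by
        nlinarith [mul_nonneg (mul_nonneg hη0.le (sub_nonneg.2 hη1.le)) hq.le]
      calc δ⁻¹ * (-q + Λ * u ^ 2 / 2) ≤ δ⁻¹ * (-(η * q)) :=
            mul_le_mul_of_nonneg_left h2 hδinv.le
        _ = -(δ⁻¹ * η * q) := by ring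
    have h2 : |r u q| ≤ δ⁻¹ * η * q / 2 := by
      apply hrK
      calc |u| ≤ (1 - η) * s := hu
        _ ≤ 2 * s := by nlinarith
    have h3 : r u q ≤ δ⁻¹ * η * q / 2 := le_trans (le_abs_self _) h2
    have hFu : F u = δ⁻¹ * (-q + Λ * u ^ 2 / 2) + r u q := rfl
    rw [hFu]
    nlinarith [mul_pos (mul_pos hδinv hη0) hq]
  -- F positive at |u| = (1+η) s
  have hFpos : ∀ u : ℝ, |u| = (1 + η) * s → 0 < F u := by
    intro u hu
    have hu2 : u ^ 2 = ((1 + η) * s) ^ 2 := by rw [← sq_abs, hu]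
    have h1 : 2 * (δ⁻¹ * η * q) ≤ δ⁻¹ * (-q + Λ * u ^ 2 / 2) := by
      have hΛu : Λ * u ^ 2 / 2 = (1 + η) ^ 2 * q := by
        rw [hu2, ← hΛs]; ring
      have h2 : 2 * (η * q) ≤ -q + Λ * u ^ 2 / 2 := by
        rw [hΛu]; nlinarith [mul_nonneg (mul_nonneg hη0.le hη0.le) hq.le]
      calc 2 * (δ⁻¹ * η * q) = δ⁻¹ * (2 * (η * q)) := by ring
        _ ≤ δ⁻¹ * (-q + Λ * u ^ 2 / 2) := mul_le_mul_of_nonneg_left h2 hδinv.le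
    have h2 : |r u q| ≤ δ⁻¹ * η * q / 2 := by
      apply hrK; rw [hu]; nlinarith
    have h3 : -(δ⁻¹ * η * q / 2) ≤ r u q := neg_le_of_abs_le h2
    have hFu : F u = δ⁻¹ * (-q + Λ * u ^ 2 / 2) + r u q := rfl
    rw [hFu]
    nlinarith [mul_pos (mul_pos hδinv hη0) hq]
  have hss : (1 - η) * s < (1 + η) * s := by nlinarith
  have h1s : 0 < (1 - η) * s := by nlinarith
  have h2s : 0 < (1 + η) * s := by nlinarith
  -- IVT zeros
  have hzero_pos : ∃ z ∈ Icc ((1 - η) * s) ((1 + η) * s), F z = 0 := by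
    have hiv := intermediate_value_Icc hss.le hFcont.continuousOn
    have h0 : (0:ℝ) ∈ Icc (F ((1 - η) * s)) (F ((1 + η) * s)) :=
      ⟨(hFneg _ (by rw [abs_of_pos h1s])).le, (hFpos _ (by rw [abs_of_pos h2s])).le⟩
    obtain ⟨z, hz, hFz⟩ := hiv h0
    exact ⟨z, hz, hFz⟩
  have hzero_neg : ∃ z ∈ Icc (-((1 + η) * s)) (-((1 - η) * s)), F z = 0 := by
    have hiv := intermediate_value_Icc' (by nlinarith : -((1 + η) * s) ≤ -((1 - η) * s))
      hFcont.continuousOn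
    have h0 : (0:ℝ) ∈ Icc (F (-((1 - η) * s))) (F (-((1 + η) * s))) :=
      ⟨(hFneg _ (by rw [abs_neg, abs_of_pos h1s])).le,
       (hFpos _ (by rw [abs_neg, abs_of_pos h2s])).le⟩
    obtain ⟨z, hz, hFz⟩ := hiv h0
    exact ⟨z, hz, hFz⟩
  -- minimal zeros
  set S : Set ℝ := {z | F z = 0} ∩ Ici ((1 - η) * s) with hS_def
  have hSclosed : IsClosed S :=
    (isClosed_singleton.preimage hFcont).inter isClosed_Ici
  obtain ⟨z1, hz1, hFz1⟩ := hzero_pos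
  have hSne : S.Nonempty := ⟨z1, hFz1, hz1.1⟩
  have hSbdd : BddBelow S := ⟨(1 - η) * s, fun z hz => hz.2⟩
  set um : ℝ := sInf S with hum_def
  have humS : um ∈ S := hSclosed.csInf_mem hSne hSbdd
  have hum_le : um ≤ z1 := csInf_le hSbdd ⟨hFz1, hz1.1⟩
  have hum_pos : 0 < um := lt_of_lt_of_le h1s humS.2
  have hum_ub : um ≤ (1 + η) * s := le_trans hum_le hz1.2
  -- negative side
  set T : Set ℝ := {z | F z = 0} ∩ Iic (-((1 - η) * s)) with hT_def
  have hTclosed : IsClosed T :=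
    (isClosed_singleton.preimage hFcont).inter isClosed_Iic
  obtain ⟨z2, hz2, hFz2⟩ := hzero_neg
  have hTne : T.Nonempty := ⟨z2, hFz2, hz2.2⟩
  have hTbdd : BddAbove T := ⟨-((1 - η) * s), fun z hz => hz.2⟩
  set up : ℝ := sSup T with hup_def
  have hupT : up ∈ T := hTclosed.csSup_mem hTne hTbdd
  have hup_ge : z2 ≤ up := le_csSup hTbdd ⟨hFz2, hz2.2⟩
  have hup_neg : up < 0 := lt_of_le_of_lt hupT.2 (by nlinarith)
  have hup_lb : -((1 + η) * s) ≤ up := le_trans hz2.1 hup_ge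
  have hupum : up < um := lt_trans hup_neg hum_pos
  -- all positive (resp. negative) zeros belong to S (resp. T)
  have hpos_zero : ∀ z : ℝ, F z = 0 → 0 < z → z ∈ S := by
    intro z hFz hz
    refine ⟨hFz, ?_⟩
    by_contra h
    simp only [mem_Ici, not_le] at h
    have : |z| ≤ (1 - η) * s := by rw [abs_of_pos hz]; linarith
    exact absurd hFz (hFneg z this).ne
  have hneg_zero : ∀ z : ℝ, F z = 0 → z < 0 → z ∈ T := by
    intro z hFz hz
    refine ⟨hFz, ?_⟩
    by_contra h
    simp only [mem_Iic, not_le] at h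
    have : |z| ≤ (1 - η) * s := by rw [abs_of_neg hz]; linarith
    exact absurd hFz (hFneg z this).ne
  -- F < 0 on (up, um)
  have hF0 : F 0 < 0 := hFneg 0 (by rw [abs_zero]; exact h1s.le)
  have hFnz : ∀ v ∈ Ioo up um, F v ≠ 0 := by
    intro v hv hFv
    rcases lt_trichotomy v 0 with h | h | h
    · have := le_csSup hTbdd (hneg_zero v hFv h)
      linarith [hv.1]
    · rw [h] at hFv; exact hF0.ne hFv
    · have := csInf_le hSbdd (hpos_zero v hFv h)
      linarith [hv.2]
  have hFneg_between : ∀ v ∈ Ioo up um, F v < 0 := by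
    intro v hv
    rcases lt_trichotomy (F v) 0 with h | h | h
    · exact h
    · exact absurd h (hFnz v hv)
    · exfalso
      rcases lt_trichotomy v 0 with hv0 | hv0 | hv0
      · obtain ⟨w, hw, hFw⟩ := (intermediate_value_Icc' hv0.le hFcont.continuousOn)
          ⟨hF0.le, h.le⟩
        have hwmem : w ∈ Ioo up um :=
          ⟨lt_of_lt_of_le hv.1 hw.1, lt_of_le_of_lt hw.2 hum_pos⟩
        exact hFnz w hwmem hFw
      · rw [hv0] at h; linarith
      · obtain ⟨w, hw, hFw⟩ := (intermediate_value_Icc hv0.le hFcont.continuousOn)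
          ⟨hF0.le, h.le⟩
        have hwmem : w ∈ Ioo up um :=
          ⟨lt_of_lt_of_le hup_neg hw.1, lt_of_le_of_lt hw.2 hv.2⟩
        exact hFnz w hwmem hFw
  -- F is C¹, Lipschitz bound on [up, um]
  have hFC1 : ContDiff ℝ 1 F := by
    rw [hF_def]
    unfold burgersField
    apply ContDiff.add
    · apply ContDiff.mul contDiff_const
      apply ContDiff.add contDiff_const
      exact ContDiff.div_const (ContDiff.mul contDiff_const (ContDiff.pow contDiff_id 2)) 2
    · have h : (fun u : ℝ => r u q) = Function.uncurry r ∘ fun u : ℝ => (u, q) := rfl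
      rw [h]
      exact hr.comp (contDiff_id.prodMk contDiff_const)
  have hFdiff : ∀ v : ℝ, DifferentiableAt ℝ F v :=
    fun v => (hFC1.differentiable one_ne_zero).differentiableAt
  have hderivcont : Continuous (deriv F) := hFC1.continuous_deriv le_rfl
  obtain ⟨C, hC⟩ := isCompact_Icc.exists_bound_of_continuousOn
    (s := Icc up um) hderivcont.continuousOn
  set L : ℝ := max C 1 with hL_def
  have hL : 0 < L := lt_of_lt_of_le one_pos (le_max_right _ _)
  have hlip : ∀ x ∈ Icc up um, ∀ y ∈ Icc up um, |F y - F x| ≤ L * |y - x| := by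
    intro x hx y hy
    have := (convex_Icc up um).norm_image_sub_le_of_norm_deriv_le (f := F) (C := L)
      (fun v _ => hFdiff v) (fun v hv => le_trans (hC v hv) (le_max_left C 1)) hx hy
    simpa [Real.norm_eq_abs] using this
  have hLa : ∀ v ∈ Ioo up um, -F v ≤ L * (v - up) := by
    intro v hv
    have h1 := hlip up ⟨le_refl _, hupum.le⟩ v ⟨hv.1.le, hv.2.le⟩
    rw [hupT.1, sub_zero] at h1
    rw [abs_of_pos (by linarith [hv.1] : (0:ℝ) < v - up)] at h1
    rwa [abs_of_neg (hFneg_between v hv)] at h1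
  have hLb : ∀ v ∈ Ioo up um, -F v ≤ L * (um - v) := by
    intro v hv
    have h1 := hlip um ⟨hupum.le, le_refl _⟩ v ⟨hv.1.le, hv.2.le⟩
    rw [humS.1, sub_zero] at h1
    rw [abs_of_neg (by linarith [hv.2] : v - um < 0), neg_sub] at h1
    rwa [abs_of_neg (hFneg_between v hv)] at h1
  obtain ⟨u, huderiv, humem, huanti, hubot, hutop⟩ :=
    hetero_exists F up um L hupum hFcont hFneg_between hL hLa hLb
  refine ⟨um, up, ⟨humS.1, mul_pos hΛ hum_pos, ?_, ?_, ?_⟩,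
    ⟨hupT.1, mul_neg_of_pos_of_neg hΛ hup_neg, ?_, ?_, ?_⟩,
    u, huderiv, ?_, ?_, hubot, hutop⟩
  · rw [abs_of_pos hum_pos]; exact mem_Ici.mp humS.2
  · rw [abs_of_pos hum_pos]; exact hum_ub
  · intro z hz hΛz
    have hz0 : 0 < z := by
      by_contra h; push_neg at h
      have h2 := mul_le_mul_of_nonneg_left h hΛ.le
      rw [mul_zero] at h2; linarith
    have := csInf_le hSbdd (hpos_zero z hz hz0)
    rw [abs_of_pos hum_pos, abs_of_pos hz0]
    exact this
  · rw [abs_of_neg hup_neg]; linarith [mem_Iic.mp hupT.2]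
  · rw [abs_of_neg hup_neg]; linarith [hup_lb]
  · intro z hz hΛz
    have hz0 : z < 0 := by
      by_contra h; push_neg at h
      have h2 := mul_nonneg hΛ.le h
      linarith
    have := le_csSup hTbdd (hneg_zero z hz hz0)
    rw [abs_of_neg hup_neg, abs_of_neg hz0]
    linarith
  · intro x
    have := humem x
    rw [min_eq_right hupum.le, max_eq_left hupum.le]
    exact ⟨this.1, this.2⟩
  · intro x y hxy
    exact mul_lt_mul_of_pos_left (huanti hxy) hΛ

end Aux

/-- **Existence of small-amplitude heteroclinic (Lax shock) connections (Lemma 5.1).**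
For the approximate Burgers flow `u' = δ⁻¹(−q + Λu²/2) + O(|u|³ + |u||q| + |q|²)` with
`δ > 0`, `Λ ≠ 0` and `Λq > 0` small, there are zeros `u∓` of the field with
`(1∓η)√(2q/Λ) ≤ |u∓| ≤ (1+η)√(2q/Λ)`, and, taking the zeros of each sign closest to `0`,
a heteroclinic solution strictly between them, with `Λu` strictly decreasing, connecting
`u₋` at `−∞` to `u₊` at `+∞`. -/
theorem small_amplitude_shock_connections
    (δ Λ C₀ : ℝ) (hδ : 0 < δ) (hΛ : Λ ≠ 0) (hC₀ : 0 < C₀)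
    (r : ℝ → ℝ → ℝ) (hr : ContDiff ℝ 1 (Function.uncurry r))
    (hrbd : ∀ u q : ℝ, |r u q| ≤ C₀ * (|u| ^ 3 + |u| * |q| + |q| ^ 2)) :
    ∀ η : ℝ, 0 < η → η < 1 →
      ∃ q₀ : ℝ, 0 < q₀ ∧
        ∀ q : ℝ, 0 < Λ * q → |q| ≤ q₀ →
          ∃ um up : ℝ,
            (burgersField δ Λ r q um = 0 ∧ 0 < Λ * um ∧
              (1 - η) * Real.sqrt (2 * q / Λ) ≤ |um| ∧
              |um| ≤ (1 + η) * Real.sqrt (2 * q / Λ) ∧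
              (∀ z : ℝ, burgersField δ Λ r q z = 0 → 0 < Λ * z → |um| ≤ |z|)) ∧
            (burgersField δ Λ r q up = 0 ∧ Λ * up < 0 ∧
              (1 - η) * Real.sqrt (2 * q / Λ) ≤ |up| ∧
              |up| ≤ (1 + η) * Real.sqrt (2 * q / Λ) ∧
              (∀ z : ℝ, burgersField δ Λ r q z = 0 → Λ * z < 0 → |up| ≤ |z|)) ∧
            ∃ u : ℝ → ℝ,
              (∀ x : ℝ, HasDerivAt u (burgersField δ Λ r q (u x)) x) ∧
              (∀ x : ℝ, min um up < u x ∧ u x < max um up) ∧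
              StrictAnti (fun x : ℝ => Λ * u x) ∧
              Tendsto u atBot (nhds um) ∧ Tendsto u atTop (nhds up) := by
  intro η hη0 hη1
  rcases hΛ.lt_or_gt with hneg | hpos
  · -- Λ < 0 : reduce to the positive case via (Λ, q, r) ↦ (-Λ, -q, -r(·, -·))
    set r' : ℝ → ℝ → ℝ := fun u p => -r u (-p) with hr'_def
    have hr' : ContDiff ℝ 1 (Function.uncurry r') := by
      have hinner : ContDiff ℝ 1 (fun p : ℝ × ℝ => (p.1, -p.2)) :=
        contDiff_fst.prodMk contDiff_snd.neg
      exact (hr.comp hinner).neg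
    have hrbd' : ∀ u p : ℝ, |r' u p| ≤ C₀ * (|u| ^ 3 + |u| * |p| + |p| ^ 2) := by
      intro u p
      have := hrbd u (-p)
      simpa [hr'_def, abs_neg] using this
    obtain ⟨q₀, hq₀, hmain⟩ := core_pos δ (-Λ) C₀ hδ (by linarith) hC₀ r' hr' hrbd' η hη0 hη1
    refine ⟨q₀, hq₀, ?_⟩
    intro q hΛq hq
    have hq' : 0 < -Λ * -q := by nlinarith
    obtain ⟨um', up', hum', hup', u', hu'deriv, hu'mem, hu'anti, hu'bot, hu'top⟩ :=
      hmain (-q) hq' (by rwa [abs_neg])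
    have hBF : ∀ z : ℝ, burgersField δ (-Λ) r' (-q) z = -burgersField δ Λ r q z := by
      intro z
      show δ⁻¹ * (-(-q) + -Λ * z ^ 2 / 2) + -r z (-(-q))
        = -(δ⁻¹ * (-q + Λ * z ^ 2 / 2) + r z q)
      rw [neg_neg]
      ring
    have hsqrt : Real.sqrt (2 * -q / -Λ) = Real.sqrt (2 * q / Λ) := by
      congr 1
      rw [mul_neg, neg_div_neg_eq]
    rw [hsqrt] at hum' hup'
    obtain ⟨hum1, hum2, hum3, hum4, hum5⟩ := hum'
    obtain ⟨hup1, hup2, hup3, hup4, hup5⟩ := hup'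
    rw [hBF] at hum1 hup1
    refine ⟨up', um', ?_, ?_, ?_⟩
    · refine ⟨by linarith [neg_eq_zero.mp (by linarith [hup1] : -burgersField δ Λ r q up' = 0)],
        ?_, hup3, hup4, ?_⟩
      · rw [neg_mul] at hup2; linarith
      · intro z hz hΛz
        apply hup5 z
        · rw [hBF z, hz, neg_zero]
        · rw [neg_mul]; linarith
    · refine ⟨by linarith [neg_eq_zero.mp (by linarith [hum1] : -burgersField δ Λ r q um' = 0)],
        ?_, hum3, hum4, ?_⟩
      · rw [neg_mul] at hum2; linarith
      · intro z hz hΛz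
        apply hum5 z
        · rw [hBF z, hz, neg_zero]
        · rw [neg_mul]; linarith
    · refine ⟨fun x => u' (-x), ?_, ?_, ?_, ?_, ?_⟩
      · intro x
        have h := (hu'deriv (-x)).comp x (hasDerivAt_neg x)
        have h2 : burgersField δ (-Λ) r' (-q) (u' (-x)) * (-1)
            = burgersField δ Λ r q (u' (-x)) := by
          rw [hBF]; ring
        rw [h2] at h
        exact h
      · intro x
        have := hu'mem (-x)
        rw [min_comm, max_comm]
        exact this
      · intro x y hxy
        have h1 := hu'anti (neg_lt_neg hxy)
        simp only [neg_mul] at h1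
        simp only
        linarith
      · exact hu'top.comp tendsto_neg_atBot_atTop
      · exact hu'bot.comp tendsto_neg_atTop_atBot
  · exact core_pos δ Λ C₀ hδ hpos hC₀ r hr hrbd η hη0 hη1
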